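/- Let p be an odd prime, k \geq 1, d a positive integer with p \nmid d, and set x = 2 p^k d. Then the ratio \prod_{1 \le j \le d p^k, p \nmid j} (x + j) / \prod_{1 \le j \le d p^k, p \nmid j} j, viewed as a p-adic integer (or as a congruence of the integer numerator against the denominator), is congruent to 1 modulo p^{3k}. -/

import Mathlib

open Finset

private lemma sum_sq_Icc (m : ℕ) :
    6 * ∑ j ∈ Finset.Icc 1 m, (j:ℤ)^2 = m*(m+1)*(2*m+1) := by
  induction m with
  | zero => simp
  | succ n ih =>
    rw [Finset.sum_Icc_succ_top (by omega : 1 ≤ n + 1)]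
    push_cast
    push_cast at ih
    linear_combination ih

private lemma three_sum_sq_dvd (p k : ℕ) (hp : p.Prime) (hpodd : Odd p) (hk : 1 ≤ k) :
    (p:ℤ)^k ∣ 3 * ∑ j ∈ (Finset.Icc 1 (p^k)).filter (fun j => ¬ p ∣ j), (j:ℤ)^2 := by
  obtain ⟨k, rfl⟩ : ∃ k', k = k' + 1 := ⟨k-1, by omega⟩
  have hppos : 0 < p := hp.pos
  have hsplit : ∑ j ∈ (Finset.Icc 1 (p^(k+1))).filter (fun j => ¬ p ∣ j), (j:ℤ)^2
      = (∑ j ∈ Finset.Icc 1 (p^(k+1)), (j:ℤ)^2)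
        - ∑ j ∈ (Finset.Icc 1 (p^(k+1))).filter (fun j => p ∣ j), (j:ℤ)^2 := by
    rw [eq_sub_iff_add_eq, add_comm]
    exact Finset.sum_filter_add_sum_filter_not _ _ _
  have hmult : ∑ j ∈ (Finset.Icc 1 (p^(k+1))).filter (fun j => p ∣ j), (j:ℤ)^2
      = ∑ i ∈ Finset.Icc 1 (p^k), ((p:ℤ)*(i:ℤ))^2 := by
    refine Finset.sum_nbij' (fun j => j / p) (fun i => p * i) ?_ ?_ ?_ ?_ ?_
    · intro a ha
      simp only [Finset.mem_filter, Finset.mem_Icc] at ha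
      obtain ⟨⟨h1, h2⟩, t, rfl⟩ := ha
      simp only [Nat.mul_div_cancel_left _ hppos, Finset.mem_Icc]
      constructor
      · rcases Nat.eq_zero_or_pos t with rfl | h; · omega
        · exact h
      · have h3 : p * t ≤ p * p^k := by
          calc p * t ≤ p^(k+1) := h2
          _ = p * p^k := by ring
        exact Nat.le_of_mul_le_mul_left h3 hppos
    · intro i hi
      simp only [Finset.mem_Icc] at hi
      simp only [Finset.mem_filter, Finset.mem_Icc]
      refine ⟨⟨by nlinarith [hi.1], ?_⟩, Dvd.intro _ rfl⟩
      calc p * i ≤ p * p^k := Nat.mul_le_mul_left _ hi.2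
      _ = p^(k+1) := by ring
    · intro a ha
      simp only [Finset.mem_filter, Finset.mem_Icc] at ha
      obtain ⟨⟨h1, h2⟩, t, rfl⟩ := ha
      simp only [Nat.mul_div_cancel_left _ hppos]
    · intro i hi
      simp only [Nat.mul_div_cancel_left _ hppos]
    · intro a ha
      simp only [Finset.mem_filter, Finset.mem_Icc] at ha
      obtain ⟨⟨h1, h2⟩, t, rfl⟩ := ha
      simp only [Nat.mul_div_cancel_left _ hppos]
      push_cast
      ring
  obtain ⟨a, ha⟩ : ∃ a : ℤ, (p:ℤ)^(k+1) + 1 = 2*a := by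
    have hodd : Odd ((p:ℤ)^(k+1)) := Odd.pow (by exact_mod_cast hpodd)
    obtain ⟨e, he⟩ := hodd
    exact ⟨e+1, by linarith⟩
  obtain ⟨b, hb⟩ : ∃ b : ℤ, (p:ℤ)^k + 1 = 2*b := by
    have hodd : Odd ((p:ℤ)^k) := Odd.pow (by exact_mod_cast hpodd)
    obtain ⟨e, he⟩ := hodd
    exact ⟨e+1, by linarith⟩
  refine ⟨a*(2*(p:ℤ)^(k+1)+1) - p*b*(2*(p:ℤ)^k+1), ?_⟩
  apply mul_left_cancel₀ (by norm_num : (6:ℤ) ≠ 0)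
  rw [hsplit, hmult]
  have e1 := sum_sq_Icc (p^(k+1))
  have e2 := sum_sq_Icc (p^k)
  have e3 : ∑ i ∈ Finset.Icc 1 (p^k), ((p:ℤ)*(i:ℤ))^2
      = (p:ℤ)^2 * ∑ i ∈ Finset.Icc 1 (p^k), (i:ℤ)^2 := by
    rw [Finset.mul_sum]
    exact Finset.sum_congr rfl fun _ _ => by ring
  push_cast at e1 e2 ⊢
  linear_combination 3*e1 - 3*(p:ℤ)^2*e2 + 3*(p:ℤ)^(k+1)*(2*(p:ℤ)^(k+1)+1)*ha
    - 3*(p:ℤ)^(k+2)*(2*(p:ℤ)^k+1)*hb - 18*e3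

private lemma sum_over_units (p k : ℕ) (hp : p.Prime) (hk : 1 ≤ k) [NeZero (p^k)]
    {M : Type*} [AddCommMonoid M] (f : ZMod (p^k) → M) :
    ∑ j ∈ (Finset.Icc 1 (p^k)).filter (fun j => ¬ p ∣ j), f (j : ZMod (p^k)) =
      ∑ w : (ZMod (p^k))ˣ, f (w : ZMod (p^k)) := by
  haveI : Fact (1 < p^k) := ⟨Nat.one_lt_pow (by omega) hp.one_lt⟩
  have cop : ∀ j ∈ (Finset.Icc 1 (p^k)).filter (fun j => ¬ p ∣ j), Nat.Coprime j (p^k) := by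
    intro j hj
    simp only [Finset.mem_filter, Finset.mem_Icc] at hj
    exact Nat.Coprime.pow_right _ ((hp.coprime_iff_not_dvd.mpr hj.2).symm)
  refine Finset.sum_bij' (fun j hj => ZMod.unitOfCoprime j (cop j hj))
    (fun w _ => (w : ZMod (p^k)).val) ?_ ?_ ?_ ?_ ?_
  · intro a ha; exact Finset.mem_univ _
  · intro w _
    show (w : ZMod (p^k)).val ∈ _
    simp only [Finset.mem_filter, Finset.mem_Icc]
    have hco := ZMod.val_coe_unit_coprime w
    have hlt : (w : ZMod (p^k)).val < p^k := ZMod.val_lt _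
    have hne : (w : ZMod (p^k)).val ≠ 0 := by
      intro h0
      have h2 : ((w : ZMod (p^k)).val : ZMod (p^k)) = (w : ZMod (p^k)) :=
        ZMod.natCast_rightInverse _
      rw [h0] at h2
      exact w.ne_zero (by exact_mod_cast h2.symm)
    refine ⟨⟨Nat.one_le_iff_ne_zero.mpr hne, hlt.le⟩, ?_⟩
    intro hdvd
    have hpk : p ∣ p^k := dvd_pow_self p (by omega)
    have h1 : p ∣ Nat.gcd ((w : ZMod (p^k)).val) (p^k) := Nat.dvd_gcd hdvd hpk
    rw [Nat.Coprime] at hco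
    rw [hco] at h1
    have := Nat.le_of_dvd one_pos h1
    have := hp.two_le
    omega
  · intro a ha
    show ((ZMod.unitOfCoprime a (cop a ha) : ZMod (p^k))).val = a
    rw [ZMod.coe_unitOfCoprime, ZMod.val_natCast]
    simp only [Finset.mem_filter, Finset.mem_Icc] at ha
    have : a < p^k := by
      rcases lt_or_eq_of_le ha.1.2 with h | h
      · exact h
      · exact absurd (h ▸ dvd_pow_self p (by omega)) ha.2
    exact Nat.mod_eq_of_lt this
  · intro w hw
    ext
    simp only [ZMod.coe_unitOfCoprime]
    exact ZMod.natCast_rightInverse _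
  · intro a ha
    show f _ = f ((ZMod.unitOfCoprime a (cop a ha) : ZMod (p^k)))
    rw [ZMod.coe_unitOfCoprime]

private lemma copies_sum (p k : ℕ) (hk : 1 ≤ k) {M : Type*} [AddCommMonoid M]
    (f : ZMod (p^k) → M) (d : ℕ) :
    ∑ j ∈ (Finset.Icc 1 (d*p^k)).filter (fun j => ¬ p ∣ j), f (j : ZMod (p^k)) =
      d • ∑ j ∈ (Finset.Icc 1 (p^k)).filter (fun j => ¬ p ∣ j), f (j : ZMod (p^k)) := by
  induction d with
  | zero => simp
  | succ e ih =>
    have key : ∀ m : ℕ, ∑ j ∈ (Finset.Icc 1 m).filter (fun j => ¬ p ∣ j), f (j : ZMod (p^k))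
        = ∑ j ∈ Finset.Ioc 0 m, (if ¬ p ∣ j then f (j : ZMod (p^k)) else 0) := by
      intro m
      rw [Finset.sum_filter, ← Finset.Icc_add_one_left_eq_Ioc]
      rfl
    rw [key, key] at *
    have hsplit : (∑ j ∈ Finset.Ioc 0 (e*p^k), (if ¬ p ∣ j then f (j : ZMod (p^k)) else 0))
        + (∑ j ∈ Finset.Ioc (e*p^k) ((e+1)*p^k), (if ¬ p ∣ j then f (j : ZMod (p^k)) else 0))
        = ∑ j ∈ Finset.Ioc 0 ((e+1)*p^k), (if ¬ p ∣ j then f (j : ZMod (p^k)) else 0) :=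
      Finset.sum_Ioc_consecutive _ (by omega) (Nat.mul_le_mul_right _ (Nat.le_succ e))
    rw [← hsplit, ih, succ_nsmul]
    congr 1
    have hmap : Finset.Ioc (e*p^k) ((e+1)*p^k)
        = (Finset.Ioc 0 (p^k)).map (addLeftEmbedding (e*p^k)) := by
      rw [Finset.map_add_left_Ioc]
      congr 1 <;> ring
    rw [hmap, Finset.sum_map]
    apply Finset.sum_congr rfl
    intro j hj
    have hdvd : p ∣ e * p^k := Dvd.dvd.mul_left (dvd_pow_self p (by omega)) e
    have h1 : (p ∣ e*p^k + j) ↔ (p ∣ j) := by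
      constructor
      · intro h; exact (Nat.dvd_add_right hdvd).mp h
      · intro h; exact Nat.dvd_add hdvd h
    have h2 : ((e*p^k + j : ℕ) : ZMod (p^k)) = (j : ZMod (p^k)) := by
      rw [Nat.cast_add, Nat.cast_mul, ZMod.natCast_self, mul_zero, zero_add]
    simp only [addLeftEmbedding_apply, h1, h2]

private lemma three_inv_sq (p k d : ℕ) (hp : p.Prime) (hpodd : Odd p) (hk : 1 ≤ k) :
    (3 : ZMod (p^k)) * ∑ j ∈ (Finset.Icc 1 (d*p^k)).filter (fun j => ¬ p ∣ j),
        ((j : ZMod (p^k))⁻¹)^2 = 0 := by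
  haveI : NeZero (p^k) := ⟨pow_ne_zero _ hp.pos.ne'⟩
  have base : (3 : ZMod (p^k)) * ∑ j ∈ (Finset.Icc 1 (p^k)).filter (fun j => ¬ p ∣ j),
      ((j : ZMod (p^k))⁻¹)^2 = 0 := by
    have h1 := sum_over_units p k hp hk (fun z => (z⁻¹)^2)
    have h2 := sum_over_units p k hp hk (fun z => z^2)
    rw [h1]
    have h3 : ∑ w : (ZMod (p^k))ˣ, (((w : ZMod (p^k)))⁻¹)^2
        = ∑ w : (ZMod (p^k))ˣ, ((w : ZMod (p^k)))^2 := by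
      have e1 : ∀ w : (ZMod (p^k))ˣ, (((w : ZMod (p^k)))⁻¹)^2
          = (((w⁻¹ : (ZMod (p^k))ˣ) : ZMod (p^k)))^2 := by
        intro w; rw [ZMod.inv_coe_unit]
      rw [Finset.sum_congr rfl (fun w _ => e1 w)]
      exact Fintype.sum_equiv (Equiv.inv _) _ _ (fun w => rfl)
    rw [h3, ← h2]
    have h4 : ((3 * ∑ j ∈ (Finset.Icc 1 (p^k)).filter (fun j => ¬ p ∣ j), (j:ℤ)^2 : ℤ)
        : ZMod (p^k)) = 0 := by
      rw [ZMod.intCast_zmod_eq_zero_iff_dvd]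
      have hd := three_sum_sq_dvd p k hp hpodd hk
      have : ((p^k : ℕ) : ℤ) = (p:ℤ)^k := by push_cast; ring
      rw [this]
      exact hd
    push_cast at h4
    exact h4
  have hc := copies_sum p k hk (fun z => ((z)⁻¹)^2) d
  rw [hc, mul_smul_comm, base, smul_zero]

private lemma two_mul_prod_one_add {R : Type*} [CommRing R] {ι : Type*} [DecidableEq ι]
    (s : Finset ι) (a : ι → R)
    (h3 : ∀ i ∈ s, ∀ j ∈ s, ∀ l ∈ s, a i * a j * a l = 0) :
    2 * ∏ i ∈ s, (1 + a i) =
      2 + 2 * ∑ i ∈ s, a i + (∑ i ∈ s, a i)^2 - ∑ i ∈ s, (a i)^2 := by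
  revert h3
  refine Finset.induction_on s ?_ ?_
  · intro _; simp
  · intro i s hx ih h3
    have ih' := ih (fun a' ha b hb c hc => h3 a' (Finset.mem_insert_of_mem ha) b
      (Finset.mem_insert_of_mem hb) c (Finset.mem_insert_of_mem hc))
    rw [Finset.prod_insert hx, Finset.sum_insert hx, Finset.sum_insert hx]
    have hiT : a i * ((∑ j ∈ s, a j) * (∑ l ∈ s, a l)) = 0 := by
      rw [Finset.sum_mul_sum, Finset.mul_sum]
      apply Finset.sum_eq_zero; intro j hj
      rw [Finset.mul_sum]
      apply Finset.sum_eq_zero; intro l hl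
      have h := h3 i (Finset.mem_insert_self i s) j (Finset.mem_insert_of_mem hj) l
        (Finset.mem_insert_of_mem hl)
      linear_combination h
    have hiQ : a i * (∑ j ∈ s, (a j)^2) = 0 := by
      rw [Finset.mul_sum]
      apply Finset.sum_eq_zero; intro j hj
      have h := h3 i (Finset.mem_insert_self i s) j (Finset.mem_insert_of_mem hj) j
        (Finset.mem_insert_of_mem hj)
      linear_combination h
    linear_combination (1 + a i) * ih' + hiT - hiQ

theorem stmt_5 (p k d : ℕ) (hp : p.Prime) (hpodd : Odd p) (hk : 1 ≤ k)
    (hd : 0 < d) (hnd : ¬ p ∣ d) :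
    (∏ j ∈ (Finset.Icc 1 (d * p^k)).filter (fun j => ¬ p ∣ j), ((2*p^k*d : ℤ) + j)) ≡
      (∏ j ∈ (Finset.Icc 1 (d * p^k)).filter (fun j => ¬ p ∣ j), (j : ℤ)) [ZMOD (p^(3*k))] := by
  have hppos := hp.pos
  haveI : NeZero (p^(3*k)) := ⟨pow_ne_zero _ hppos.ne'⟩
  haveI : NeZero (p^k) := ⟨pow_ne_zero _ hppos.ne'⟩
  have hmod : ((p:ℤ))^(3*k) = ((p^(3*k) : ℕ) : ℤ) := by push_cast; ring
  rw [hmod, ← ZMod.intCast_eq_intCast_iff]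
  push_cast
  set N := p^(3*k) with hN
  set S := (Finset.Icc 1 (d * p^k)).filter (fun j => ¬ p ∣ j) with hS
  set C : ZMod N := (p : ZMod N)^k with hC
  set c : ZMod N := 2 * (p : ZMod N)^k * (d : ZMod N) with hc
  -- goal should now be: ∏ j ∈ S, (c + j) = ∏ j ∈ S, j
  have hC3 : C^3 = 0 := by
    rw [hC, ← pow_mul]
    have h1 : (p : ZMod N)^(k*3) = ((p^(3*k) : ℕ) : ZMod N) := by push_cast; ring
    rw [h1, hN]
    exact ZMod.natCast_self _
  have hcopS : ∀ j ∈ S, Nat.Coprime j N := by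
    intro j hj
    rw [hS, Finset.mem_filter] at hj
    exact ((hp.coprime_iff_not_dvd.mpr hj.2).symm).pow_right _
  set u : ℕ → ZMod N := fun j => (j : ZMod N)⁻¹ with hu_def
  have hu : ∀ j ∈ S, (j : ZMod N) * u j = 1 := fun j hj =>
    ZMod.coe_mul_inv_eq_one j (hcopS j hj)
  -- step A
  have hprod : ∏ j ∈ S, (c + (j : ZMod N)) =
      (∏ j ∈ S, (j : ZMod N)) * ∏ j ∈ S, (1 + c * u j) := by
    rw [← Finset.prod_mul_distrib]
    apply Finset.prod_congr rfl
    intro j hj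
    have h := hu j hj
    linear_combination (-c) * h
  -- membership facts
  have hmemS : ∀ j, j ∈ S ↔ (1 ≤ j ∧ j ≤ d*p^k ∧ ¬ p ∣ j) := by
    intro j; rw [hS, Finset.mem_filter, Finset.mem_Icc, and_assoc]
  have hpn : p ∣ d * p^k := Dvd.dvd.mul_left (dvd_pow_self p (by omega)) d
  have hlt : ∀ j ∈ S, j < d * p^k := by
    intro j hj
    rw [hmemS] at hj
    rcases lt_or_eq_of_le hj.2.1 with h|h
    · exact h
    · exact absurd (h ▸ hpn) hj.2.2
  have hflip : ∀ j ∈ S, d*p^k - j ∈ S := by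
    intro j hj
    have hl := hlt j hj
    rw [hmemS] at hj ⊢
    refine ⟨by omega, by omega, fun hdv => hj.2.2 ?_⟩
    have h2 := Nat.dvd_sub hpn hdv
    rwa [Nat.sub_sub_self (by omega)] at h2
  have hflipflip : ∀ j ∈ S, d*p^k - (d*p^k - j) = j := by
    intro j hj
    exact Nat.sub_sub_self (le_of_lt (hlt j hj))
  have hν : ((d*p^k : ℕ) : ZMod N) = (d : ZMod N) * C := by
    rw [hC]; push_cast; ring
  have hpair : ∀ j ∈ S, u j + u (d*p^k - j) =
      ((d : ZMod N) * C) * (u j * u (d*p^k - j)) := by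
    intro j hj
    have h1 := hu j hj
    have h2 := hu _ (hflip j hj)
    have hcast : ((d*p^k - j : ℕ) : ZMod N) = ((d*p^k : ℕ) : ZMod N) - (j : ZMod N) := by
      have hle : j ≤ d*p^k := le_of_lt (hlt j hj)
      push_cast [hle]
      ring
    rw [hcast, hν] at h2
    linear_combination (-(u (d*p^k - j))) * h1 - (u j) * h2
  have hsum_flip : ∑ j ∈ S, u (d*p^k - j) = ∑ j ∈ S, u j := by
    refine Finset.sum_nbij' (fun j => d*p^k - j) (fun j => d*p^k - j) ?_ ?_ ?_ ?_ ?_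
    · exact fun a ha => hflip a ha
    · exact fun a ha => hflip a ha
    · exact fun a ha => hflipflip a ha
    · exact fun a ha => hflipflip a ha
    · intro a ha; rfl
  set U1 := ∑ j ∈ S, u j with hU1
  set Q := ∑ j ∈ S, (u j)^2 with hQ
  set G := ∑ j ∈ S, ((u j)^2 * u (d*p^k - j)) with hG
  have h2U : 2 * U1 = ((d : ZMod N) * C)^2 * G - ((d : ZMod N) * C) * Q := by
    have e0 : 2 * U1 = ∑ j ∈ S, (u j + u (d*p^k - j)) := by
      rw [Finset.sum_add_distrib, hsum_flip, hU1]; ring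
    rw [e0]
    have e1 : ∀ j ∈ S, u j + u (d*p^k - j) =
        ((d : ZMod N) * C)^2 * ((u j)^2 * u (d*p^k - j)) - ((d : ZMod N) * C) * (u j)^2 := by
      intro j hj
      have hpj := hpair j hj
      linear_combination (1 + ((d : ZMod N) * C) * u j) * hpj
    rw [Finset.sum_congr rfl e1, Finset.sum_sub_distrib, ← Finset.mul_sum, ← Finset.mul_sum]
  -- crux
  have hQ3 : ∃ W : ZMod N, (3 : ZMod N) * Q = C * W := by
    have hdvd : p^k ∣ N := pow_dvd_pow p (by omega : k ≤ 3*k)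
    set φ := ZMod.castHom hdvd (ZMod (p^k)) with hφ
    have hred : φ (3 * Q) = 0 := by
      rw [map_mul, map_sum]
      have hφu : ∀ j ∈ S, φ ((u j)^2) = ((j : ZMod (p^k))⁻¹)^2 := by
        intro j hj
        rw [map_pow]
        congr 1
        have h1 := hu j hj
        have h2 : (j : ZMod (p^k)) * φ (u j) = 1 := by
          have h3 := congrArg φ h1
          rwa [map_mul, map_natCast, map_one] at h3
        exact ((ZMod.inv_eq_of_mul_eq_one _ _ _ h2).symm).symm ▸
          (ZMod.inv_eq_of_mul_eq_one _ _ _ h2).symm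
      rw [Finset.sum_congr rfl hφu]
      have h30 := three_inv_sq p k d hp hpodd hk
      rw [map_ofNat]
      exact h30
    have h0 : (((3*Q).val : ℕ) : ZMod (p^k)) = 0 := by
      rw [ZMod.natCast_val]
      rw [hφ, ZMod.castHom_apply] at hred
      exact hred
    obtain ⟨t, ht⟩ := (ZMod.natCast_eq_zero_iff _ _).mp h0
    refine ⟨(t : ZMod N), ?_⟩
    have hback : (((3*Q).val : ℕ) : ZMod N) = 3*Q := ZMod.natCast_rightInverse _
    rw [← hback, ht]
    rw [hC]
    push_cast
    ring
  obtain ⟨W, hW⟩ := hQ3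
  -- triple products vanish
  have htriple : ∀ i ∈ S, ∀ j ∈ S, ∀ l ∈ S, (c * u i) * (c * u j) * (c * u l) = 0 := by
    intro i _ j _ l _
    have : c = 2 * C * (d : ZMod N) := by rw [hc, hC]
    rw [this]
    linear_combination (8*(d : ZMod N)^3*(u i * u j * u l)) * hC3
  have hP := two_mul_prod_one_add S (fun j => c * u j) htriple
  have hTa : ∑ j ∈ S, c * u j = c * U1 := by rw [hU1, Finset.mul_sum]
  have hQa : ∑ j ∈ S, (c * u j)^2 = c^2 * Q := by
    rw [hQ, Finset.mul_sum]
    exact Finset.sum_congr rfl fun j _ => by ring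
  rw [hTa, hQa] at hP
  -- conclude product of (1 + c u j) is 1
  have hcν : c = 2 * ((d : ZMod N) * C) := by rw [hc, hC]; ring
  have key : (8 : ZMod N) * ∏ j ∈ S, (1 + c * u j) = 8 := by
    linear_combination 4*hP +
      (8*((d : ZMod N)*C) + 8*((d : ZMod N)*C)^2*U1 + 4*((d : ZMod N)*C)^4*G
        - 4*((d : ZMod N)*C)^3*Q) * h2U
      - 8*((d : ZMod N)*C)^2 * hW
      + (8*(d : ZMod N)^3*G + 4*(d : ZMod N)^6*C^3*G^2 - 8*(d : ZMod N)^5*C^2*G*Q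
        + 4*(d : ZMod N)^4*C*Q^2 - 8*(d : ZMod N)^2*W) * hC3
      + (4*U1 + 2*c*U1^2 - 2*c*Q) * hcν
  have h2unit : IsUnit (2 : ZMod N) := by
    rw [show ((2 : ZMod N)) = ((2 : ℕ) : ZMod N) by norm_num, ZMod.isUnit_iff_coprime]
    refine Nat.Coprime.pow_right _ ?_
    refine (Nat.prime_two.coprime_iff_not_dvd).mpr ?_
    intro h2
    have hp2 : p = 2 := ((Nat.prime_dvd_prime_iff_eq Nat.prime_two hp).mp h2).symm
    rw [hp2] at hpodd
    exact (Nat.not_odd_iff_even.mpr (by norm_num)) hpodd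
  have h8 : IsUnit (8 : ZMod N) := by
    have h := h2unit.pow 3
    have e : (2 : ZMod N)^3 = 8 := by norm_num
    rwa [e] at h
  have hone : ∏ j ∈ S, (1 + c * u j) = 1 := by
    refine h8.mul_left_cancel ?_
    rw [mul_one]
    exact key
  rw [hprod, hone, mul_one]
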